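/- arXiv:1811.07327 — 2 statements merged into one kernel-verified Lean document; each statement's English description precedes it below -/
import Mathlib

section
/- Let G be a graph and k ≥ 1. There exist k path-packings of G whose union covers every vertex if and only if |S| ≤ 2k·|N(S)| for every stable set S of G. -/
/-- `M` is a matching of `G`: a set of edges of `G` that are pairwise vertex-disjoint. -/
def IsMatching {V : Type*} (G : SimpleGraph V) (M : Finset (Sym2 V)) : Prop :=
  ↑M ⊆ G.edgeSet ∧ (M : Set (Sym2 V)).Pairwise fun e f => ∀ v : V, ¬(v ∈ e ∧ v ∈ f)

/-- A vertex `v` is covered by an edge set `F` if some edge of `F` is incident to it. -/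
def Covers {V : Type*} (F : Finset (Sym2 V)) (v : V) : Prop := ∃ e ∈ F, v ∈ e

instance {V : Type*} [DecidableEq V] (F : Finset (Sym2 V)) (v : V) : Decidable (Covers F v) :=
  inferInstanceAs (Decidable (∃ e ∈ F, v ∈ e))

/-- A stable (independent) set of vertices. -/
def IsStable {V : Type*} (G : SimpleGraph V) (S : Finset V) : Prop :=
  ∀ u ∈ S, ∀ v ∈ S, ¬ G.Adj u v

/-- The external neighborhood `N(S)`. -/
def nbr {V : Type*} [Fintype V] [DecidableEq V] (G : SimpleGraph V) [DecidableRel G.Adj]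
    (S : Finset V) : Finset V :=
  Finset.univ.filter fun w => w ∉ S ∧ ∃ u ∈ S, G.Adj u w

/-- degree of a vertex in an edge set -/
def degF {V : Type*} [DecidableEq V] (F : Finset (Sym2 V)) (v : V) : ℕ :=
  (F.filter fun e => v ∈ e).card

/-- `F` is a path-packing: each component of `F` is a path. Equivalently, all degrees
are at most 2 and the spanned graph is acyclic. -/
def IsPathPacking {V : Type*} [DecidableEq V] (G : SimpleGraph V) (F : Finset (Sym2 V)) : Prop :=
  ↑F ⊆ G.edgeSet ∧ (∀ v : V, degF F v ≤ 2) ∧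
    (SimpleGraph.fromEdgeSet (↑F : Set (Sym2 V))).IsAcyclic

namespace PP
open Finset
set_option linter.unusedSectionVars false

variable {V : Type*} [DecidableEq V]

-- assume section-1 lemmas
lemma covers_iff_degF_pos (F : Finset (Sym2 V)) (v : V) : Covers F v ↔ 0 < degF F v := by
  simp [Covers, degF, Finset.card_pos, Finset.filter_nonempty_iff]
lemma two_le_degF {F : Finset (Sym2 V)} {v : V} {e₁ e₂ : Sym2 V} (h1 : e₁ ∈ F) (h2 : e₂ ∈ F)
    (hv1 : v ∈ e₁) (hv2 : v ∈ e₂) (hne : e₁ ≠ e₂) : 2 ≤ degF F v :=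
  Finset.one_lt_card.mpr ⟨e₁, by simp [h1, hv1], e₂, by simp [h2, hv2], hne⟩
lemma degF_le_one_unique {F : Finset (Sym2 V)} {v : V} (h : degF F v ≤ 1)
    {e₁ e₂ : Sym2 V} (h1 : e₁ ∈ F) (h2 : e₂ ∈ F) (hv1 : v ∈ e₁) (hv2 : v ∈ e₂) : e₁ = e₂ := by
  by_contra hne; have := two_le_degF h1 h2 hv1 hv2 hne; omega
lemma degF_insert {F : Finset (Sym2 V)} {e : Sym2 V} (he : e ∉ F) (v : V) :
    degF (insert e F) v = degF F v + if v ∈ e then 1 else 0 := by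
  unfold degF
  rw [Finset.filter_insert]
  by_cases hv : v ∈ e
  · rw [if_pos hv, if_pos hv,
      Finset.card_insert_of_notMem (fun hc => he (Finset.mem_of_mem_filter _ hc))]
  · rw [if_neg hv, if_neg hv, add_zero]
lemma degF_erase {F : Finset (Sym2 V)} {e : Sym2 V} (he : e ∈ F) (v : V) :
    degF F v = degF (F.erase e) v + if v ∈ e then 1 else 0 := by
  have h2 : e ∉ F.erase e := Finset.notMem_erase e F
  have h3 : insert e (F.erase e) = F := Finset.insert_erase he
  rw [← h3, degF_insert h2, h3]
lemma covers_mono {F F' : Finset (Sym2 V)} (h : F ⊆ F') {v : V} (hc : Covers F v) : Covers F' v := by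
  obtain ⟨e, he, hv⟩ := hc; exact ⟨e, h he, hv⟩

variable [Fintype V]

/-- number of covered vertices -/
def coveredCard (F : Finset (Sym2 V)) : ℕ := (univ.filter fun v => Covers F v).card

def Valid (G : SimpleGraph V) (t : ℕ) (F : Finset (Sym2 V)) : Prop :=
  ↑F ⊆ G.edgeSet ∧ ∀ v, degF F v ≤ t

def Opt (G : SimpleGraph V) (t : ℕ) (F : Finset (Sym2 V)) : Prop :=
  Valid G t F ∧ (∀ F', Valid G t F' → coveredCard F' ≤ coveredCard F) ∧
    ∀ F', Valid G t F' → coveredCard F' = coveredCard F → F.card ≤ F'.card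

lemma exists_opt (G : SimpleGraph V) (t : ℕ) : ∃ F, Opt G t F := by
  classical
  have hne : (univ.filter fun F => Valid G t F).Nonempty :=
    ⟨∅, by rw [Finset.mem_filter]; exact ⟨Finset.mem_univ _, by simp [Valid, degF]⟩⟩
  obtain ⟨F₀, hF₀mem, hF₀max⟩ := Finset.exists_max_image _ coveredCard hne
  have hne2 : ((univ.filter fun F => Valid G t F).filter
      fun F => coveredCard F = coveredCard F₀).Nonempty := ⟨F₀, by simp_all⟩
  obtain ⟨F, hFmem, hFmin⟩ := Finset.exists_min_image _ Finset.card hne2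
  simp only [Finset.mem_filter, Finset.mem_univ, true_and] at hFmem
  refine ⟨F, hFmem.1, ?_, ?_⟩
  · intro F' hF'
    rw [hFmem.2]
    exact hF₀max F' (by simp [hF'])
  · intro F' hF' hcc
    exact hFmin F' (by simp [hF', hcc, hFmem.2])

lemma covered_eq_of_imp {G : SimpleGraph V} {t : ℕ} {F F' : Finset (Sym2 V)}
    (hOpt : Opt G t F) (hF' : Valid G t F')
    (himp : ∀ v, Covers F v → Covers F' v) : ∀ v, Covers F' v ↔ Covers F v := by
  classical
  have hsub : (univ.filter fun v => Covers F v) ⊆ (univ.filter fun v => Covers F' v) := by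
    intro v hv; simp only [mem_filter, mem_univ, true_and] at *; exact himp v hv
  have hcard : (univ.filter fun v => Covers F' v).card ≤ (univ.filter fun v => Covers F v).card :=
    hOpt.2.1 F' hF'
  have := Finset.eq_of_subset_of_card_le hsub hcard
  intro v
  constructor
  · intro hv
    have : v ∈ (univ.filter fun v => Covers F v) := by rw [this]; simp [hv]
    simpa using this
  · exact himp v

lemma opt_pendant {G : SimpleGraph V} {t : ℕ} {F : Finset (Sym2 V)} (hOpt : Opt G t F) :
    ∀ e ∈ F, ∃ x ∈ e, degF F x = 1 := by
  classical
  intro e he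
  induction e using Sym2.ind with
  | _ a b =>
  have hadj : G.Adj a b := (SimpleGraph.mem_edgeSet G).mp (hOpt.1.1 he)
  have hda : 1 ≤ degF F a := (covers_iff_degF_pos F a).mp ⟨_, he, Sym2.mem_mk_left a b⟩
  have hdb : 1 ≤ degF F b := (covers_iff_degF_pos F b).mp ⟨_, he, Sym2.mem_mk_right a b⟩
  by_contra hno
  push_neg at hno
  have hda2 : 2 ≤ degF F a := by
    have := hno a (Sym2.mem_mk_left a b); omega
  have hdb2 : 2 ≤ degF F b := by
    have := hno b (Sym2.mem_mk_right a b); omega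
  -- erase e
  set F' := F.erase s(a, b) with hF'
  have hval' : Valid G t F' := by
    constructor
    · exact fun x hx => hOpt.1.1 (Finset.erase_subset _ _ hx)
    · intro v
      exact le_trans (Finset.card_le_card (Finset.filter_subset_filter _ (Finset.erase_subset _ _)))
        (hOpt.1.2 v)
  have himp : ∀ v, Covers F v → Covers F' v := by
    intro v ⟨e', he', hv⟩
    by_cases hee : e' = s(a, b)
    · subst hee
      rcases Sym2.mem_iff.mp hv with rfl | rfl
      · -- v = a, degF ≥ 2: another edge
        obtain ⟨e₁, h1, e₂, h2, hne⟩ := Finset.one_lt_card.mp hda2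
        simp only [mem_filter] at h1 h2
        by_cases h : e₁ = s(v, b)
        · exact ⟨e₂, Finset.mem_erase.mpr ⟨by rw [← h]; exact hne.symm, h2.1⟩, h2.2⟩
        · exact ⟨e₁, Finset.mem_erase.mpr ⟨h, h1.1⟩, h1.2⟩
      · obtain ⟨e₁, h1, e₂, h2, hne⟩ := Finset.one_lt_card.mp hdb2
        simp only [mem_filter] at h1 h2
        by_cases h : e₁ = s(a, v)
        · exact ⟨e₂, Finset.mem_erase.mpr ⟨by rw [← h]; exact hne.symm, h2.1⟩, h2.2⟩
        · exact ⟨e₁, Finset.mem_erase.mpr ⟨h, h1.1⟩, h1.2⟩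
    · exact ⟨e', Finset.mem_erase.mpr ⟨hee, he'⟩, hv⟩
  have hceq := covered_eq_of_imp hOpt hval' himp
  have hcards : coveredCard F' = coveredCard F := by
    unfold coveredCard; congr 1; ext v; simp [hceq v]
  have := hOpt.2.2 F' hval' hcards
  have hlt : F'.card < F.card := Finset.card_erase_lt_of_mem he
  omega

/-- alternating chains -/
inductive Chain (G : SimpleGraph V) : Finset (Sym2 V) → V → ℕ → Prop where
  | base {F : Finset (Sym2 V)} {v c : V} : ¬ Covers F v → G.Adj v c → Chain G F c 0
  | step {F : Finset (Sym2 V)} {c' : V} {n : ℕ} {ℓ c : V} :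
      Chain G F c' n → degF F ℓ = 1 → s(ℓ, c') ∈ F → G.Adj ℓ c → Chain G F c (n + 1)


lemma chain_transfer {G : SimpleGraph V} {t : ℕ} {F : Finset (Sym2 V)} {ℓ c c' : V}
    (ht : 2 ≤ t)
    (hc'deg : degF F c' = t)
    (hℓdeg : degF F ℓ = 1)
    (hedge : s(ℓ, c') ∈ F)
    (hAdj : G.Adj ℓ c)
    (hccov : Covers F c)
    (hnew : s(ℓ, c) ∉ F)
    (hcc' : c ≠ c')
    (hcoveq : ∀ w, Covers (insert s(ℓ, c) (F.erase s(ℓ, c'))) w ↔ Covers F w) :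
    ∀ {x m}, Chain G F x m →
      Chain G (insert s(ℓ, c) (F.erase s(ℓ, c'))) x m ∨
        (∃ m' < m, Chain G F c' m') ∨ (∃ m' ≤ m, Chain G F ℓ m') := by
  have hℓc : ℓ ≠ c := hAdj.ne
  have hℓc' : ℓ ≠ c' := by
    intro h; rw [h] at hℓdeg; omega
  intro x m hch
  induction hch with
  | base hv hadjv =>
    left
    exact Chain.base (fun hcv => hv ((hcoveq _).mp hcv)) hadjv
  | step d hx1 hxe hadjxy IH =>
    rename_i F₀ cj msub xj y
    -- note F₀ is definitionally F since induction over fixed F; names: d : Chain G F cj msub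
    rcases IH with hd' | ⟨m', hm', d'⟩ | ⟨m', hm', d'⟩
    · by_cases hxℓ : xj = ℓ
      · subst hxℓ
        have : s(xj, cj) = s(xj, c') :=
          degF_le_one_unique (le_of_eq hℓdeg) hxe hedge (Sym2.mem_mk_left _ _) (Sym2.mem_mk_left _ _)
        have hcjc' : cj = c' := Sym2.congr_right.mp this
        subst hcjc'
        exact Or.inr (Or.inl ⟨msub, Nat.lt_succ_self _, d⟩)
      · by_cases hxc : xj = c
        · subst hxc
          exact Or.inr (Or.inr ⟨msub + 1, le_refl _, Chain.step d hx1 hxe hAdj.symm⟩)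
        · have hxc' : xj ≠ c' := by
            intro h; rw [h] at hx1; omega
          have hxnot1 : xj ∉ s(ℓ, c) := by
            rw [Sym2.mem_iff]; push_neg; exact ⟨hxℓ, hxc⟩
          have hxnot2 : xj ∉ s(ℓ, c') := by
            rw [Sym2.mem_iff]; push_neg; exact ⟨hxℓ, hxc'⟩
          have hmemnew : s(ℓ, c) ∉ F.erase s(ℓ, c') := fun h => hnew (Finset.mem_of_mem_erase h)
          have hdeg' : degF (insert s(ℓ, c) (F.erase s(ℓ, c'))) xj = 1 := by
            rw [degF_insert hmemnew, if_neg hxnot1, add_zero]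
            have := degF_erase hedge xj
            rw [if_neg hxnot2, add_zero] at this
            omega
          have hmem' : s(xj, cj) ∈ insert s(ℓ, c) (F.erase s(ℓ, c')) := by
            apply Finset.mem_insert_of_mem
            apply Finset.mem_erase.mpr
            refine ⟨?_, hxe⟩
            intro h
            have : xj ∈ s(ℓ, c') := h ▸ Sym2.mem_mk_left _ _
            exact hxnot2 this
          exact Or.inl (Chain.step hd' hdeg' hmem' hadjxy)
    · exact Or.inr (Or.inl ⟨m', Nat.lt_succ_of_lt hm', d'⟩)
    · exact Or.inr (Or.inr ⟨m', Nat.le_succ_of_le hm', d'⟩)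


lemma chain_degF {G : SimpleGraph V} {t : ℕ} (ht : 2 ≤ t) :
    ∀ n (F : Finset (Sym2 V)) (c : V), Opt G t F → Chain G F c n → degF F c = t := by
  intro n
  induction n using Nat.strong_induction_on with
  | _ n IH =>
  intro F c hOpt hch
  by_contra hne
  have hlt : degF F c < t := lt_of_le_of_ne (hOpt.1.2 c) hne
  cases hch with
  | base hv hadjv =>
    rename_i v
    have hnotmem : s(v, c) ∉ F := fun h => hv ⟨_, h, Sym2.mem_mk_left _ _⟩
    have hdegv : degF F v = 0 := by
      by_contra h
      exact hv ((covers_iff_degF_pos F v).mpr (Nat.pos_of_ne_zero h))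
    have hval' : Valid G t (insert s(v, c) F) := by
      constructor
      · rw [Finset.coe_insert, Set.insert_subset_iff]
        exact ⟨(SimpleGraph.mem_edgeSet G).mpr hadjv, hOpt.1.1⟩
      · intro w
        rw [degF_insert hnotmem]
        by_cases hw : w ∈ s(v, c)
        · rw [if_pos hw]
          rcases Sym2.mem_iff.mp hw with rfl | rfl
          · omega
          · omega
        · rw [if_neg hw, add_zero]; exact hOpt.1.2 w
    have hstrict : coveredCard F < coveredCard (insert s(v, c) F) := by
      apply Finset.card_lt_card
      constructor
      · intro w hw
        simp only [mem_filter, mem_univ, true_and] at *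
        exact covers_mono (Finset.subset_insert _ _) hw
      · intro hsub
        have : v ∈ univ.filter fun w => Covers (insert s(v, c) F) w := by
          simp only [mem_filter, mem_univ, true_and]
          exact ⟨s(v, c), Finset.mem_insert_self _ _, Sym2.mem_mk_left _ _⟩
        have := hsub this
        simp only [mem_filter, mem_univ, true_and] at this
        exact hv this
    exact absurd (hOpt.2.1 _ hval') (by omega)
  | step d hℓdeg hedge hAdjlc =>
    rename_i c' n' ℓ
    have hc'deg : degF F c' = t := IH n' (Nat.lt_succ_self _) F c' hOpt d
    have hcc' : c ≠ c' := by intro h; rw [h] at hlt; omega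
    have hadjℓc' : G.Adj ℓ c' := (SimpleGraph.mem_edgeSet G).mp (hOpt.1.1 hedge)
    have hℓc' : ℓ ≠ c' := hadjℓc'.ne
    have hℓc : ℓ ≠ c := hAdjlc.ne
    have hnew : s(ℓ, c) ∉ F := by
      intro h
      have heq : s(ℓ, c) = s(ℓ, c') :=
        degF_le_one_unique (le_of_eq hℓdeg) h hedge (Sym2.mem_mk_left _ _) (Sym2.mem_mk_left _ _)
      exact hcc' (Sym2.congr_right.mp heq)
    have hmemnew : s(ℓ, c) ∉ F.erase s(ℓ, c') := fun h => hnew (Finset.mem_of_mem_erase h)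
    set F' := insert s(ℓ, c) (F.erase s(ℓ, c')) with hF'def
    -- degrees in F'
    have hdegF' : ∀ w, degF F' w + (if w ∈ s(ℓ, c') then 1 else 0)
        = degF F w + (if w ∈ s(ℓ, c) then 1 else 0) := by
      intro w
      rw [hF'def, degF_insert hmemnew]
      have := degF_erase hedge w
      omega
    have hval' : Valid G t F' := by
      constructor
      · rw [hF'def, Finset.coe_insert, Set.insert_subset_iff]
        exact ⟨(SimpleGraph.mem_edgeSet G).mpr hAdjlc,
          fun x hx => hOpt.1.1 (Finset.erase_subset _ _ hx)⟩
      · intro w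
        have h1 := hdegF' w
        by_cases hwc : w = c
        · subst hwc
          have hwnot : w ∉ s(ℓ, c') := by
            rw [Sym2.mem_iff]; push_neg; exact ⟨fun h => hℓc h.symm, hcc'⟩
          rw [if_neg hwnot, if_pos (Sym2.mem_mk_right _ _)] at h1
          omega
        · have hite : (if w ∈ s(ℓ, c) then 1 else 0) ≤ (if w ∈ s(ℓ, c') then (1:ℕ) else 0) := by
            by_cases hw : w ∈ s(ℓ, c)
            · rcases Sym2.mem_iff.mp hw with rfl | rfl
              · simp
              · exact absurd rfl hwc
            · simp [hw]
          have := hOpt.1.2 w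
          omega
    have hsubF' : ∀ e'' ∈ F, e'' ≠ s(ℓ, c') → e'' ∈ F' := by
      intro e'' he hne2
      rw [hF'def]
      exact Finset.mem_insert_of_mem (Finset.mem_erase.mpr ⟨hne2, he⟩)
    have hselfF' : s(ℓ, c) ∈ F' := by rw [hF'def]; exact Finset.mem_insert_self _ _
    have himp : ∀ w, Covers F w → Covers F' w := by
      intro w ⟨e'', he'', hw⟩
      by_cases hee : e'' = s(ℓ, c')
      · subst hee
        rcases Sym2.mem_iff.mp hw with rfl | rfl
        · exact ⟨s(w, c), hselfF', Sym2.mem_mk_left _ _⟩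
        · -- w = c' : has another edge since degF = t ≥ 2
          have : 1 < degF F w := by omega
          obtain ⟨e₁, h1, e₂, h2, hne12⟩ := Finset.one_lt_card.mp this
          simp only [mem_filter] at h1 h2
          by_cases h : e₁ = s(ℓ, w)
          · refine ⟨e₂, hsubF' e₂ h2.1 ?_, h2.2⟩
            rw [← h]; exact hne12.symm
          · exact ⟨e₁, hsubF' e₁ h1.1 h, h1.2⟩
      · exact ⟨e'', hsubF' e'' he'' hee, hw⟩
    by_cases hccov : Covers F c
    · -- covered sets equal, F' also optimal, use transfer
      have hcoveq : ∀ w, Covers F' w ↔ Covers F w := by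
        intro w
        constructor
        · intro ⟨e'', he'', hw⟩
          rw [hF'def] at he''
          rcases Finset.mem_insert.mp he'' with rfl | h
          · rcases Sym2.mem_iff.mp hw with rfl | rfl
            · exact (covers_iff_degF_pos F w).mpr (by omega)
            · exact hccov
          · exact ⟨e'', Finset.mem_of_mem_erase h, hw⟩
        · exact himp w
      have hcards : coveredCard F' = coveredCard F := by
        unfold coveredCard; congr 1; ext w; simp [hcoveq w]
      have hcard' : F'.card = F.card := by
        rw [hF'def, Finset.card_insert_of_notMem hmemnew, Finset.card_erase_of_mem hedge]
        have : 1 ≤ F.card := Finset.card_pos.mpr ⟨_, hedge⟩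
        omega
      have hOpt' : Opt G t F' := by
        refine ⟨hval', ?_, ?_⟩
        · intro F'' h''
          rw [hcards]; exact hOpt.2.1 F'' h''
        · intro F'' h'' heq
          rw [hcard']; exact hOpt.2.2 F'' h'' (heq.trans hcards)
      rcases chain_transfer ht hc'deg hℓdeg hedge hAdjlc hccov hnew hcc' hcoveq d with
        hd' | ⟨m', hm', d'⟩ | ⟨m', hm', d'⟩
      · have := IH n' (Nat.lt_succ_self _) F' c' hOpt' hd'
        -- degF F' c' = t - 1
        have h1 := hdegF' c'
        rw [if_pos (Sym2.mem_mk_right _ _), if_neg (by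
          rw [Sym2.mem_iff]; push_neg; exact ⟨fun h => hℓc' h.symm, fun h => hcc' h.symm⟩)] at h1
        omega
      · have hch2 : Chain G F c (m' + 1) := Chain.step d' hℓdeg hedge hAdjlc
        have := IH (m' + 1) (by omega) F c hOpt hch2
        omega
      · have := IH m' (by omega) F ℓ hOpt d'
        omega
    · -- c uncovered: strict improvement
      have hstrict : coveredCard F < coveredCard F' := by
        apply Finset.card_lt_card
        constructor
        · intro w hw
          simp only [mem_filter, mem_univ, true_and] at *
          exact himp w hw
        · intro hsub
          have : c ∈ univ.filter fun w => Covers F' w := by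
            simp only [mem_filter, mem_univ, true_and]
            exact ⟨s(ℓ, c), hselfF', Sym2.mem_mk_right _ _⟩
          have := hsub this
          simp only [mem_filter, mem_univ, true_and] at this
          exact hccov this
      exact absurd (hOpt.2.1 _ hval') (by omega)


lemma exists_good_cover (G : SimpleGraph V) [DecidableRel G.Adj] {t : ℕ} (ht : 2 ≤ t)
    (hcond : ∀ S : Finset V, IsStable G S → S.card ≤ t * (nbr G S).card) :
    ∃ F : Finset (Sym2 V), ↑F ⊆ G.edgeSet ∧ (∀ v, degF F v ≤ t) ∧ (∀ v, Covers F v) ∧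
      ∀ e ∈ F, ∃ x ∈ e, degF F x = 1 := by
  classical
  obtain ⟨F, hOpt⟩ := exists_opt G t
  have hpend := opt_pendant hOpt
  suffices hcov : ∀ v, Covers F v by exact ⟨F, hOpt.1.1, hOpt.1.2, hcov, hpend⟩
  by_contra hnc
  push_neg at hnc
  obtain ⟨v₀, hv₀⟩ := hnc
  set R : Finset V := univ.filter (fun c => ∃ n, Chain G F c n) with hRdef
  set U : Finset V := univ.filter (fun v => ¬ Covers F v) with hUdef
  set L : Finset V := univ.filter
    (fun x => degF F x = 1 ∧ ∃ c, c ∈ R ∧ s(x, c) ∈ F) with hLdef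
  have hR : ∀ c ∈ R, degF F c = t := by
    intro c hc
    rw [hRdef, mem_filter] at hc
    obtain ⟨-, n, hch⟩ := hc
    exact chain_degF ht n F c hOpt hch
  have hUdeg : ∀ v ∈ U, degF F v = 0 := by
    intro v hv
    rw [hUdef, mem_filter] at hv
    by_contra h
    exact hv.2 ((covers_iff_degF_pos F v).mpr (Nat.pos_of_ne_zero h))
  have hLdeg : ∀ x ∈ L, degF F x = 1 := by
    intro x hx; rw [hLdef, mem_filter] at hx; exact hx.2.1
  have hmemR : ∀ c, (∃ n, Chain G F c n) → c ∈ R := by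
    intro c hc; rw [hRdef, mem_filter]; exact ⟨mem_univ _, hc⟩
  -- any G-neighbor of U ∪ L admits a chain
  have hkey : ∀ u ∈ U ∪ L, ∀ w, G.Adj u w → ∃ n, Chain G F w n := by
    intro u hu w hadj
    rcases Finset.mem_union.mp hu with hu | hu
    · rw [hUdef, mem_filter] at hu
      exact ⟨0, Chain.base hu.2 hadj⟩
    · rw [hLdef, mem_filter] at hu
      obtain ⟨-, hdeg1, c, hcR, hedge⟩ := hu
      rw [hRdef, mem_filter] at hcR
      obtain ⟨-, n, hch⟩ := hcR
      exact ⟨n + 1, Chain.step hch hdeg1 hedge hadj⟩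
  have hULdeg : ∀ u ∈ U ∪ L, degF F u ≤ 1 := by
    intro u hu
    rcases Finset.mem_union.mp hu with h | h
    · rw [hUdeg u h]; omega
    · rw [hLdeg u h]
  have hstable : IsStable G (U ∪ L) := by
    intro u hu v hv hadj
    obtain ⟨n, hch⟩ := hkey u hu v hadj
    have := chain_degF ht n F v hOpt hch
    have := hULdeg v hv
    omega
  have hnbr : nbr G (U ∪ L) ⊆ R := by
    intro w hw
    rw [nbr, mem_filter] at hw
    obtain ⟨-, -, u, hu, hadj⟩ := hw
    exact hmemR w (hkey u hu w hadj)
  -- counting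
  have hSc : ∀ c ∈ R, (univ.filter (fun x => s(x, c) ∈ F)).card = t := by
    intro c hc
    rw [← hR c hc]
    unfold degF
    apply Finset.card_bij (fun x _ => s(x, c))
    · intro x hx
      rw [mem_filter] at hx
      exact mem_filter.mpr ⟨hx.2, Sym2.mem_mk_right _ _⟩
    · intro x1 h1 x2 h2 heq
      exact Sym2.congr_left.mp heq
    · intro e he
      rw [mem_filter] at he
      obtain ⟨y, hy⟩ := Sym2.mem_iff_exists.mp he.2
      refine ⟨y, mem_filter.mpr ⟨mem_univ _, ?_⟩, ?_⟩
      · rw [Sym2.eq_swap, ← hy]; exact he.1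
      · rw [Sym2.eq_swap, ← hy]
  have hScL : ∀ c ∈ R, (univ.filter (fun x => s(x, c) ∈ F)) ⊆ L := by
    intro c hc x hx
    rw [mem_filter] at hx
    obtain ⟨y, hy, hydeg⟩ := hpend _ hx.2
    have hcdeg := hR c hc
    have hxdeg : degF F x = 1 := by
      rcases Sym2.mem_iff.mp hy with rfl | rfl
      · exact hydeg
      · omega
    rw [hLdef, mem_filter]
    exact ⟨mem_univ _, hxdeg, c, hc, hx.2⟩
  have hdisj : (R : Set V).PairwiseDisjoint (fun c => univ.filter (fun x => s(x, c) ∈ F)) := by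
    intro c1 h1 c2 h2 hne
    apply Finset.disjoint_left.mpr
    intro x hx1 hx2
    have hxdeg : degF F x = 1 := hLdeg x (hScL c1 h1 hx1)
    rw [mem_filter] at hx1 hx2
    have := degF_le_one_unique (le_of_eq hxdeg) hx1.2 hx2.2
      (Sym2.mem_mk_left _ _) (Sym2.mem_mk_left _ _)
    exact hne (Sym2.congr_right.mp this)
  have hcount : t * R.card ≤ L.card := by
    have h1 : (R.biUnion (fun c => univ.filter (fun x => s(x, c) ∈ F))).card
        = ∑ c ∈ R, (univ.filter (fun x => s(x, c) ∈ F)).card :=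
      Finset.card_biUnion (fun c hc d hd hcd => hdisj hc hd hcd)
    have h2 : ∑ c ∈ R, (univ.filter (fun x => s(x, c) ∈ F)).card = t * R.card := by
      rw [Finset.sum_congr rfl hSc, Finset.sum_const, smul_eq_mul, mul_comm]
    have h3 : R.biUnion (fun c => univ.filter (fun x => s(x, c) ∈ F)) ⊆ L := by
      intro x hx
      obtain ⟨c, hc, hxc⟩ := Finset.mem_biUnion.mp hx
      exact hScL c hc hxc
    calc t * R.card = _ := h2.symm
    _ = _ := h1.symm
    _ ≤ L.card := Finset.card_le_card h3
  have hUL : (U ∪ L).card = U.card + L.card := by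
    apply Finset.card_union_of_disjoint
    apply Finset.disjoint_left.mpr
    intro x hx1 hx2
    have := hUdeg x hx1
    have := hLdeg x hx2
    omega
  have hUpos : 0 < U.card := by
    apply Finset.card_pos.mpr
    exact ⟨v₀, by rw [hUdef, mem_filter]; exact ⟨mem_univ _, hv₀⟩⟩
  have hmain := hcond (U ∪ L) hstable
  have hnbrcard : (nbr G (U ∪ L)).card ≤ R.card := Finset.card_le_card hnbr
  have : t * (nbr G (U ∪ L)).card ≤ t * R.card := Nat.mul_le_mul_left t hnbrcard
  omega


lemma acyclic_of_pendant {F F'' : Finset (Sym2 V)} (hsub : F'' ⊆ F)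
    (hpend : ∀ e ∈ F, ∃ x ∈ e, degF F x = 1) :
    (SimpleGraph.fromEdgeSet (↑F'' : Set (Sym2 V))).IsAcyclic := by
  intro u p hp
  have hedges : ∀ e ∈ p.edges, e ∈ F := by
    intro e he
    have := p.edges_subset_edgeSet he
    rw [SimpleGraph.edgeSet_fromEdgeSet] at this
    exact hsub this.1
  have hnenil : p.edges ≠ [] := by
    intro h
    have h3 := hp.three_le_length
    have := p.length_edges
    rw [h] at this; simp at this; omega
  obtain ⟨e0, he0F⟩ := List.exists_mem_of_ne_nil _ hnenil
  obtain ⟨x, hxe, hxdeg⟩ := hpend e0 (hedges e0 he0F)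
  obtain ⟨y0, rfl⟩ := Sym2.mem_iff_exists.mp hxe
  have hxsupp : x ∈ p.support := p.fst_mem_support_of_mem_edges he0F
  obtain ⟨q', hq'cyc, hq'edges⟩ :
      ∃ q' : (SimpleGraph.fromEdgeSet (↑F'' : Set (Sym2 V))).Walk x x,
        q'.IsCycle ∧ ∀ e ∈ q'.edges, e ∈ F :=
    ⟨p.rotate x hxsupp, hp.rotate hxsupp,
      fun e he => hedges e ((p.rotate_edges x hxsupp).mem_iff.mp he)⟩
  cases q' with
  | nil => exact hq'cyc.ne_nil rfl
  | cons hadj2 r =>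
    rename_i y
    have hnodup : (s(x, y) :: r.edges).Nodup := by
      have := hq'cyc.isCircuit.isTrail.edges_nodup
      simpa using this
    have he1F : s(x, y) ∈ F := hq'edges _ (by simp)
    obtain ⟨rr, hrredges⟩ :
        ∃ rr : (SimpleGraph.fromEdgeSet (↑F'' : Set (Sym2 V))).Walk x y,
          rr.edges = r.edges.reverse := ⟨r.reverse, r.edges_reverse⟩
    cases rr with
    | nil => exact hadj2.ne rfl
    | cons hadj3 r2 =>
      rename_i z
      have he2r : s(x, z) ∈ r.edges := by
        have : s(x, z) ∈ r.edges.reverse := by rw [← hrredges]; simp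
        rwa [List.mem_reverse] at this
      have he2F : s(x, z) ∈ F := hq'edges _ (by simp [he2r])
      have hne : s(x, y) ≠ s(x, z) := by
        intro h
        rw [h] at hnodup
        exact (List.nodup_cons.mp hnodup).1 he2r
      have := two_le_degF he1F he2F (Sym2.mem_mk_left _ _) (Sym2.mem_mk_left _ _) hne
      omega


lemma build_packings (G : SimpleGraph V) {k : ℕ} (hk : 1 ≤ k)
    {F : Finset (Sym2 V)} (hsub : ↑F ⊆ G.edgeSet) (hdeg : ∀ v, degF F v ≤ 2 * k)
    (hcov : ∀ v, Covers F v) (hpend : ∀ e ∈ F, ∃ x ∈ e, degF F x = 1) :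
    ∃ H : Fin k → Finset (Sym2 V),
      (∀ i, (↑(H i) : Set (Sym2 V)) ⊆ G.edgeSet ∧ (∀ v : V, degF (H i) v ≤ 2) ∧
        (SimpleGraph.fromEdgeSet (↑(H i) : Set (Sym2 V))).IsAcyclic) ∧
      ∀ v : V, ∃ i, Covers (H i) v := by
  classical
  set idx : V → Sym2 V → ℕ := fun b e => (F.filter (fun e' => b ∈ e')).toList.idxOf e
    with hidxdef
  have hidxlt : ∀ b : V, ∀ e ∈ F, b ∈ e → idx b e < degF F b := by
    intro b e he hb
    have hmem : e ∈ (F.filter (fun e' => b ∈ e')).toList := by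
      rw [Finset.mem_toList, mem_filter]; exact ⟨he, hb⟩
    have := List.idxOf_lt_length_iff.mpr hmem
    rwa [Finset.length_toList] at this
  have hidxinj : ∀ b : V, ∀ e₁ ∈ F, ∀ e₂ ∈ F, b ∈ e₁ → b ∈ e₂ →
      idx b e₁ = idx b e₂ → e₁ = e₂ := by
    intro b e₁ h1 e₂ h2 hb1 hb2 heq
    have hm1 : e₁ ∈ (F.filter (fun e' => b ∈ e')).toList := by
      rw [Finset.mem_toList, mem_filter]; exact ⟨h1, hb1⟩
    have hm2 : e₂ ∈ (F.filter (fun e' => b ∈ e')).toList := by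
      rw [Finset.mem_toList, mem_filter]; exact ⟨h2, hb2⟩
    have := List.idxOf_inj hm1 (y := e₂)
    rw [hidxdef] at heq
    exact this.mp heq
  set H : Fin k → Finset (Sym2 V) := fun i =>
    F.filter (fun e => ∃ a b, e = s(a, b) ∧ degF F a = 1 ∧ idx b e / 2 = i.val) with hHdef
  have hHsub : ∀ i, H i ⊆ F := fun i => Finset.filter_subset _ _
  refine ⟨H, fun i => ⟨?_, ?_, ?_⟩, ?_⟩
  · exact fun e he => hsub (hHsub i he)
  · -- degrees ≤ 2
    intro v
    by_cases hv : degF F v ≤ 2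
    · calc degF (H i) v ≤ degF F v :=
        Finset.card_le_card (Finset.filter_subset_filter _ (hHsub i))
      _ ≤ 2 := hv
    · push_neg at hv
      unfold degF
      have hmaps : ∀ e ∈ (H i).filter (fun e => v ∈ e),
          idx v e ∈ ({2 * i.val, 2 * i.val + 1} : Finset ℕ) := by
        intro e he
        rw [mem_filter] at he
        obtain ⟨heH, hve⟩ := he
        rw [hHdef, mem_filter] at heH
        obtain ⟨heF, a, b, rfl, hadeg, hidx2⟩ := heH
        have hvb : v = b := by
          rcases Sym2.mem_iff.mp hve with rfl | rfl
          · omega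
          · rfl
        subst hvb
        simp only [Finset.mem_insert, Finset.mem_singleton]
        omega
      have hinj : ∀ e₁ ∈ (H i).filter (fun e => v ∈ e), ∀ e₂ ∈ (H i).filter (fun e => v ∈ e),
          idx v e₁ = idx v e₂ → e₁ = e₂ := by
        intro e₁ h1 e₂ h2 heq
        rw [mem_filter] at h1 h2
        exact hidxinj v e₁ (hHsub i h1.1) e₂ (hHsub i h2.1) h1.2 h2.2 heq
      calc ((H i).filter (fun e => v ∈ e)).card
          ≤ ({2 * i.val, 2 * i.val + 1} : Finset ℕ).card :=
            Finset.card_le_card_of_injOn (idx v) hmaps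
              (fun e₁ h1 e₂ h2 => hinj e₁ h1 e₂ h2)
        _ ≤ 2 := Finset.card_insert_le _ _ |>.trans (by simp)
  · exact acyclic_of_pendant (hHsub i) hpend
  · -- coverage
    intro v
    obtain ⟨e, he, hve⟩ := hcov v
    obtain ⟨a, ha, hadeg⟩ := hpend e he
    obtain ⟨b, rfl⟩ := Sym2.mem_iff_exists.mp ha
    have hblt : idx b s(a, b) < 2 * k := by
      have h1 := hidxlt b s(a, b) he (Sym2.mem_mk_right _ _)
      have := hdeg b
      omega
    refine ⟨⟨idx b s(a, b) / 2, by omega⟩, s(a, b), ?_, hve⟩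
    rw [hHdef, mem_filter]
    exact ⟨he, a, b, rfl, hadeg, rfl⟩


lemma forward_count (G : SimpleGraph V) [DecidableRel G.Adj] {k : ℕ}
    (H : Fin k → Finset (Sym2 V))
    (hpack : ∀ i, IsPathPacking G (H i)) (hcov : ∀ v : V, ∃ i, Covers (H i) v)
    (S : Finset V) (hS : IsStable G S) : S.card ≤ 2 * k * (nbr G S).card := by
  classical
  choose f hf using hcov
  choose g hg1 hg2 using hf
  set T : Finset (Fin k × Sym2 V) := (univ : Finset (Fin k)).biUnion
    (fun i => ((H i).filter (fun e => ∃ v ∈ S, v ∈ e)).image (fun e => (i, e))) with hTdef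
  have hST : S.card ≤ T.card := by
    apply Finset.card_le_card_of_injOn (fun v => (f v, g v))
    · intro v hv
      rw [hTdef]
      apply Finset.mem_biUnion.mpr
      exact ⟨f v, mem_univ _, Finset.mem_image.mpr
        ⟨g v, mem_filter.mpr ⟨hg1 v, ⟨v, hv, hg2 v⟩⟩, rfl⟩⟩
    · intro u hu v hv heq
      by_contra hne
      have h1 : f u = f v := congrArg Prod.fst heq
      have h2 : g u = g v := congrArg Prod.snd heq
      have huv : g v = s(u, v) := by
        rw [← Sym2.mem_and_mem_iff hne]
        exact ⟨h2 ▸ hg2 u, hg2 v⟩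
      have : g v ∈ G.edgeSet := (hpack (f v)).1 (hg1 v)
      rw [huv, SimpleGraph.mem_edgeSet] at this
      exact hS u hu v hv this
  have hTle : T.card ≤ ∑ i : Fin k, ((H i).filter (fun e => ∃ v ∈ S, v ∈ e)).card := by
    rw [hTdef]
    refine le_trans (Finset.card_biUnion_le) ?_
    exact Finset.sum_le_sum (fun i _ => Finset.card_image_le)
  have hper : ∀ i, ((H i).filter (fun e => ∃ v ∈ S, v ∈ e)).card ≤ 2 * (nbr G S).card := by
    intro i
    have hsub2 : (H i).filter (fun e => ∃ v ∈ S, v ∈ e) ⊆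
        (nbr G S).biUnion (fun w => (H i).filter (fun e => w ∈ e)) := by
      intro e he
      rw [mem_filter] at he
      obtain ⟨heH, v, hvS, hve⟩ := he
      obtain ⟨w, rfl⟩ := Sym2.mem_iff_exists.mp hve
      have hadj : G.Adj v w := by
        have := (hpack i).1 heH
        rwa [SimpleGraph.mem_edgeSet] at this
      have hwS : w ∉ S := fun hw => hS v hvS w hw hadj
      apply Finset.mem_biUnion.mpr
      refine ⟨w, ?_, mem_filter.mpr ⟨heH, Sym2.mem_mk_right _ _⟩⟩
      rw [nbr, mem_filter]
      exact ⟨mem_univ _, hwS, v, hvS, hadj⟩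
    refine le_trans (Finset.card_le_card hsub2) ?_
    refine le_trans Finset.card_biUnion_le ?_
    calc ∑ w ∈ nbr G S, ((H i).filter (fun e => w ∈ e)).card
        ≤ ∑ _w ∈ nbr G S, 2 := Finset.sum_le_sum (fun w _ => (hpack i).2.1 w)
      _ = 2 * (nbr G S).card := by rw [Finset.sum_const, smul_eq_mul, mul_comm]
  calc S.card ≤ T.card := hST
    _ ≤ ∑ i : Fin k, ((H i).filter (fun e => ∃ v ∈ S, v ∈ e)).card := hTle
    _ ≤ ∑ _i : Fin k, 2 * (nbr G S).card := Finset.sum_le_sum (fun i _ => hper i)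
    _ = 2 * k * (nbr G S).card := by
        rw [Finset.sum_const, Finset.card_univ, Fintype.card_fin, smul_eq_mul]
        ring

end PP


theorem stmt_17 {V : Type*} [Fintype V] [DecidableEq V] (G : SimpleGraph V) [DecidableRel G.Adj]
    (k : ℕ) (hk : 1 ≤ k) :
    (∃ H : Fin k → Finset (Sym2 V),
        (∀ i, IsPathPacking G (H i)) ∧ ∀ v : V, ∃ i, Covers (H i) v) ↔
      ∀ S : Finset V, IsStable G S → S.card ≤ 2 * k * (nbr G S).card := by
  constructor
  · intro ⟨H, hpack, hcov⟩ S hS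
    exact PP.forward_count G H hpack hcov S hS
  · intro hcond
    have ht : 2 ≤ 2 * k := by omega
    obtain ⟨F, hsub, hdeg, hcov, hpend⟩ := PP.exists_good_cover G ht hcond
    obtain ⟨H, hpack, hcov'⟩ := PP.build_packings G hk hsub hdeg hcov hpend
    exact ⟨H, hpack, hcov'⟩
end

section
/- If a connected graph G satisfies |S| ≤ |N(S)| for every stable set S but has no perfect matching, then the vertices of G can be covered by 2 matchings but not by 1 matching. -/
theorem stmt_19 {V : Type*} [Fintype V] [DecidableEq V] (G : SimpleGraph V) [DecidableRel G.Adj]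
    (hG : G.Connected)
    (hcond : ∀ S : Finset V, IsStable G S → S.card ≤ (nbr G S).card)
    (hnopm : ¬ ∃ M : Finset (Sym2 V), IsMatching G M ∧ ∀ v : V, Covers M v) :
    (∃ M : Fin 2 → Finset (Sym2 V),
        (∀ i, IsMatching G (M i)) ∧ ∀ v : V, ∃ i, Covers (M i) v) ∧
      ¬ ∃ M : Finset (Sym2 V), IsMatching G M ∧ ∀ v : V, Covers M v := by
  classical
  refine ⟨?_, hnopm⟩
  -- the set of matchings
  set T : Finset (Finset (Sym2 V)) := Finset.univ.filter (fun M => IsMatching G M) with hT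
  have hTne : T.Nonempty := by
    refine ⟨∅, ?_⟩
    simp [hT, IsMatching]
  obtain ⟨M, hMT, hMmax⟩ := T.exists_max_image Finset.card hTne
  have hM : IsMatching G M := by
    simpa [hT] using hMT
  -- uncovered set
  set U : Finset V := Finset.univ.filter (fun v => ¬ Covers M v) with hU
  have hUmem : ∀ v, v ∈ U ↔ ¬ Covers M v := by intro v; simp [hU]
  -- U is stable
  have hUstab : IsStable G U := by
    intro u hu v hv hadj
    have hucov : ¬ Covers M u := (hUmem u).1 hu
    have hvcov : ¬ Covers M v := (hUmem v).1 hv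
    have hne : s(u, v) ∉ M := fun h => hucov ⟨_, h, by simp⟩
    have hM' : IsMatching G (insert s(u, v) M) := by
      constructor
      · intro e he
        rcases Finset.mem_insert.1 (by exact_mod_cast he) with rfl | h
        · exact hadj
        · exact hM.1 h
      · intro e he f hf hef w hw
        simp only [Finset.coe_insert, Set.mem_insert_iff] at he hf
        rcases he with rfl | he <;> rcases hf with rfl | hf
        · exact hef rfl
        · rcases Sym2.mem_iff.1 hw.1 with rfl | rfl
          · exact hucov ⟨f, hf, hw.2⟩
          · exact hvcov ⟨f, hf, hw.2⟩
        · rcases Sym2.mem_iff.1 hw.2 with rfl | rfl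
          · exact hucov ⟨e, he, hw.1⟩
          · exact hvcov ⟨e, he, hw.1⟩
        · exact hM.2 he hf hef w hw
    have hle : (insert s(u, v) M).card ≤ M.card := by
      apply hMmax
      simp [hT, hM']
    rw [Finset.card_insert_of_notMem hne] at hle
    omega
  -- Hall condition for U
  have hall : ∀ S : Finset {x // x ∈ U},
      S.card ≤ (S.biUnion fun u => G.neighborFinset u.1).card := by
    intro S
    set S' : Finset V := S.image Subtype.val with hS'
    have hcard : S'.card = S.card := Finset.card_image_of_injective _ Subtype.val_injective
    have hsub : S' ⊆ U := by
      intro x hx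
      rcases Finset.mem_image.1 hx with ⟨u, _, rfl⟩
      exact u.2
    have hstab : IsStable G S' := fun u hu v hv =>
      hUstab u (hsub hu) v (hsub hv)
    have h1 := hcond S' hstab
    have h2 : nbr G S' ⊆ S.biUnion fun u => G.neighborFinset u.1 := by
      intro w hw
      rcases Finset.mem_filter.1 hw with ⟨-, -, u, hu, hadj⟩
      rcases Finset.mem_image.1 hu with ⟨u0, hu0, rfl⟩
      exact Finset.mem_biUnion.2 ⟨u0, hu0, by simpa using hadj⟩
    calc S.card = S'.card := hcard.symm
      _ ≤ (nbr G S').card := h1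
      _ ≤ _ := Finset.card_le_card h2
  obtain ⟨f, hfinj, hfmem⟩ :=
    (Finset.all_card_le_biUnion_card_iff_exists_injective
      (fun u : {x // x ∈ U} => G.neighborFinset u.1)).1 hall
  have hfadj : ∀ u : {x // x ∈ U}, G.Adj u.1 (f u) := fun u => by
    simpa using hfmem u
  have hfU : ∀ u : {x // x ∈ U}, f u ∉ U := fun u h =>
    hUstab u.1 u.2 (f u) h (hfadj u)
  -- second matching
  set M2 : Finset (Sym2 V) :=
    Finset.univ.image (fun u : {x // x ∈ U} => s(u.1, f u)) with hM2
  have hM2mem : ∀ u : {x // x ∈ U}, s(u.1, f u) ∈ M2 := fun u =>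
    Finset.mem_image.2 ⟨u, Finset.mem_univ u, rfl⟩
  have hM2match : IsMatching G M2 := by
    constructor
    · intro e he
      rcases Finset.mem_image.1 (by exact_mod_cast he) with ⟨u, -, rfl⟩
      exact hfadj u
    · intro e he f' hf' hef w hw
      rcases Finset.mem_image.1 (by exact_mod_cast he) with ⟨u, -, rfl⟩
      rcases Finset.mem_image.1 (by exact_mod_cast hf') with ⟨v, -, rfl⟩
      rcases Sym2.mem_iff.1 hw.1 with h1 | h1 <;>
        rcases Sym2.mem_iff.1 hw.2 with h2 | h2
      · have : u = v := Subtype.ext (h1.symm.trans h2)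
        exact hef (by rw [this])
      · exact hfU v ((h1.symm.trans h2) ▸ u.2)
      · exact hfU u ((h2.symm.trans h1) ▸ v.2)
      · have : u = v := hfinj (h1.symm.trans h2)
        exact hef (by rw [this])
  refine ⟨![M, M2], ?_, ?_⟩
  · intro i
    fin_cases i <;> simpa using (by first | exact hM | exact hM2match)
  · intro v
    by_cases h : Covers M v
    · exact ⟨0, by simpa using h⟩
    · refine ⟨1, s(v, f ⟨v, (hUmem v).2 h⟩), ?_, by simp⟩
      simpa using hM2mem ⟨v, (hUmem v).2 h⟩
end
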